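/- Let p be a preference profile and φ ∈ Stab_{G*}(p). Then all orbits of φ on I = W ∪ M have the same size, equal to the order of φ; moreover, if φ ∈ G* \ G then the order of φ is even. -/

import Mathlib

variable {I : Type*}

/-- `μ` is a matching: it maps `W` into `M` and `M` into `W`, and is an involution. -/
def IsMatching [DecidableEq I] (W M : Finset I) (μ : Equiv.Perm I) : Prop :=
  (∀ x ∈ W, μ x ∈ M) ∧ (∀ y ∈ M, μ y ∈ W) ∧ ∀ z : I, μ (μ z) = z

/-- `φ ∈ G*`: `φ` preserves the partition `{W, M}`. -/
def InGstar [DecidableEq I] (W M : Finset I) (φ : Equiv.Perm I) : Prop :=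
  (W.image ⇑φ = W ∧ M.image ⇑φ = M) ∨ (W.image ⇑φ = M ∧ M.image ⇑φ = W)

/-- `φ ∈ G`: `φ` maps `W` onto `W` and `M` onto `M`. -/
def InG [DecidableEq I] (W M : Finset I) (φ : Equiv.Perm I) : Prop :=
  W.image ⇑φ = W ∧ M.image ⇑φ = M

/-- `R` is a linear order on the set `X`. -/
def IsLinearOrderOn (X : Set I) (R : Set (I × I)) : Prop :=
  R ⊆ X ×ˢ X ∧
  (∀ x ∈ X, ∀ y ∈ X, (x, y) ∈ R ∨ (y, x) ∈ R) ∧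
  (∀ x y : I, (x, y) ∈ R → (y, x) ∈ R → x = y) ∧
  (∀ x y z : I, (x, y) ∈ R → (y, z) ∈ R → (x, z) ∈ R)

/-- `p` is a preference profile: each woman has a linear order on `M`,
each man a linear order on `W`. -/
def IsPref [DecidableEq I] (W M : Finset I) (p : I → Set (I × I)) : Prop :=
  (∀ x ∈ W, IsLinearOrderOn (↑M) (p x)) ∧ (∀ y ∈ M, IsLinearOrderOn (↑W) (p y))

/-- The pushforward of a relation along a permutation. -/
def pushRel (φ : Equiv.Perm I) (R : Set (I × I)) : Set (I × I) :=
  {q : I × I | (φ.symm q.1, φ.symm q.2) ∈ R}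

/-- The action of a permutation `φ` on a preference profile: `p^φ(z) = φ p(φ⁻¹ z)`. -/
def profAct (φ : Equiv.Perm I) (p : I → Set (I × I)) : I → Set (I × I) :=
  fun z => pushRel φ (p (φ.symm z))

/-- The orbit of `z` under the cyclic group generated by the permutation `φ`. -/
def permOrbit (φ : Equiv.Perm I) (z : I) : Set I :=
  {w : I | ∃ k : ℤ, (φ ^ k) z = w}


section
variable {I : Type*}
lemma order_rigid [DecidableEq I] (M : Finset I) (R : Set (I × I))
    (hR : IsLinearOrderOn (↑M) R) (ψ : Equiv.Perm I)
    (hM : M.image ⇑ψ = M) (hfix : pushRel ψ R = R) :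
    ∀ y ∈ M, ψ y = y := by
  classical
  obtain ⟨hsub, htot, hanti, htrans⟩ := hR
  have hmem : ∀ y ∈ M, ψ y ∈ M := fun y hy => hM ▸ Finset.mem_image_of_mem _ hy
  have hsurj : ∀ x ∈ M, ∃ x' ∈ M, ψ x' = x := by
    intro x hx
    have := hM ▸ hx
    simpa [Finset.mem_image] using this
  have hpres : ∀ a b : I, (a, b) ∈ R ↔ (ψ a, ψ b) ∈ R := by
    intro a b
    have h1 : (ψ a, ψ b) ∈ R ↔ (ψ a, ψ b) ∈ pushRel ψ R := by rw [hfix]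
    simpa [pushRel] using h1.symm
  set down : I → Finset I := fun y => M.filter (fun x => (x, y) ∈ R) with hdown
  have hcard : ∀ y ∈ M, (down (ψ y)).card = (down y).card := by
    intro y hy
    have himg : (down y).image ⇑ψ = down (ψ y) := by
      ext x
      simp only [Finset.mem_image, hdown, Finset.mem_filter]
      constructor
      · rintro ⟨a, ⟨haM, haR⟩, rfl⟩
        exact ⟨hmem a haM, (hpres a y).1 haR⟩
      · rintro ⟨hxM, hxR⟩
        obtain ⟨x', hx'M, rfl⟩ := hsurj x hxM
        exact ⟨x', ⟨hx'M, (hpres x' y).2 hxR⟩, rfl⟩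
    rw [← himg, Finset.card_image_of_injective _ ψ.injective]
  have hltrank : ∀ y ∈ M, ∀ y' ∈ M, (y, y') ∈ R → y ≠ y' →
      (down y).card < (down y').card := by
    intro y hy y' hy' hr hne
    apply Finset.card_lt_card
    constructor
    · intro x hx
      simp only [hdown, Finset.mem_filter] at hx ⊢
      exact ⟨hx.1, htrans _ _ _ hx.2 hr⟩
    · intro hss
      have hy'self : y' ∈ down y' := by
        simp only [hdown, Finset.mem_filter]
        refine ⟨hy', ?_⟩
        rcases htot y' hy' y' hy' with h | h <;> exact h
      have := hss hy'self
      simp only [hdown, Finset.mem_filter] at this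
      exact hne (hanti _ _ hr this.2)
  intro y hy
  by_contra hne
  have hψy := hmem y hy
  have hc := hcard y hy
  rcases htot (ψ y) hψy y hy with h | h
  · exact absurd hc (Nat.ne_of_lt (hltrank _ hψy _ hy h hne))
  · exact absurd hc (Nat.ne_of_gt (hltrank _ hy _ hψy h (Ne.symm hne)))

end
section Aux
variable {I : Type*}

lemma pushRel_one (R : Set (I × I)) : pushRel 1 R = R := by
  ext q; simp [pushRel, Equiv.Perm.one_symm]

lemma pushRel_mul (φ ψ : Equiv.Perm I) (R : Set (I × I)) :
    pushRel (φ * ψ) R = pushRel φ (pushRel ψ R) := by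
  ext q; simp [pushRel, Equiv.Perm.mul_def, Equiv.symm_trans_apply]

lemma profAct_one (p : I → Set (I × I)) : profAct 1 p = p := by
  funext z; simp [profAct, pushRel_one, Equiv.Perm.one_symm]

lemma profAct_mul (φ ψ : Equiv.Perm I) (p : I → Set (I × I)) :
    profAct (φ * ψ) p = profAct φ (profAct ψ p) := by
  funext z
  show pushRel (φ * ψ) (p ((φ * ψ).symm z)) = pushRel φ (pushRel ψ (p (ψ.symm (φ.symm z))))
  rw [pushRel_mul]
  congr 2

lemma profAct_pow (φ : Equiv.Perm I) (p : I → Set (I × I)) (h : profAct φ p = p) :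
    ∀ k : ℕ, profAct (φ ^ k) p = p := by
  intro k
  induction k with
  | zero => simpa using profAct_one p
  | succ k ih => rw [pow_succ, profAct_mul, h, ih]

lemma InGstar_mul [DecidableEq I] (W M : Finset I) (φ ψ : Equiv.Perm I)
    (hφ : InGstar W M φ) (hψ : InGstar W M ψ) : InGstar W M (φ * ψ) := by
  have h1 : W.image ⇑(φ * ψ) = (W.image ⇑ψ).image ⇑φ := by
    rw [Finset.image_image]; rfl
  have h2 : M.image ⇑(φ * ψ) = (M.image ⇑ψ).image ⇑φ := by
    rw [Finset.image_image]; rfl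
  rcases hψ with ⟨hW, hM⟩ | ⟨hW, hM⟩ <;> rcases hφ with ⟨hW', hM'⟩ | ⟨hW', hM'⟩ <;>
    simp only [InGstar, h1, h2, hW, hM, hW', hM'] <;> tauto

lemma InGstar_pow [DecidableEq I] (W M : Finset I) (φ : Equiv.Perm I)
    (hφ : InGstar W M φ) : ∀ k : ℕ, InGstar W M (φ ^ k) := by
  intro k
  induction k with
  | zero => left; constructor <;> simp [Finset.image_id]
  | succ k ih => rw [pow_succ]; exact InGstar_mul W M _ _ ih hφ

/-- A partition-preserving stabilizing permutation with a fixed point is the identity. -/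
lemma fix_eq_one [Fintype I] [DecidableEq I] (W M : Finset I)
    (hd : Disjoint W M) (hu : W ∪ M = Finset.univ)
    (hWne : W.Nonempty) (hMne : M.Nonempty)
    (p : I → Set (I × I)) (hp : IsPref W M p)
    (ψ : Equiv.Perm I) (hψ : InGstar W M ψ) (hstab : profAct ψ p = p)
    (z : I) (hz : ψ z = z) : ψ = 1 := by
  have hzu : z ∈ W ∪ M := hu ▸ Finset.mem_univ z
  rw [Finset.mem_union] at hzu
  -- ψ is in G
  have hG : W.image ⇑ψ = W ∧ M.image ⇑ψ = M := by
    rcases hψ with h | ⟨hW, hM⟩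
    · exact h
    · exfalso
      rcases hzu with hzW | hzM
      · have : ψ z ∈ M := hW ▸ Finset.mem_image_of_mem _ hzW
        rw [hz] at this
        exact Finset.disjoint_left.mp hd hzW this
      · have : ψ z ∈ W := hM ▸ Finset.mem_image_of_mem _ hzM
        rw [hz] at this
        exact Finset.disjoint_left.mp hd this hzM
  have key : ∀ w : I, ψ w = w →
      (w ∈ W → ∀ y ∈ M, ψ y = y) ∧ (w ∈ M → ∀ x ∈ W, ψ x = x) := by
    intro w hw
    have hsymm : ψ.symm w = w := by
      conv_lhs => rw [← hw]
      exact ψ.symm_apply_apply w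
    have hfixw : pushRel ψ (p w) = p w := by
      have := congrFun hstab w
      rw [profAct] at this
      rw [hsymm] at this
      exact this
    constructor
    · intro hwW
      exact order_rigid M (p w) (hp.1 w hwW) ψ hG.2 hfixw
    · intro hwM
      exact order_rigid W (p w) (hp.2 w hwM) ψ hG.1 hfixw
  have hall : (∀ y ∈ M, ψ y = y) ∧ (∀ x ∈ W, ψ x = x) := by
    rcases hzu with hzW | hzM
    · have hMfix := (key z hz).1 hzW
      obtain ⟨y, hy⟩ := hMne
      exact ⟨hMfix, (key y (hMfix y hy)).2 hy⟩
    · have hWfix := (key z hz).2 hzM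
      obtain ⟨x, hx⟩ := hWne
      exact ⟨(key x (hWfix x hx)).1 hx, hWfix⟩
  ext t
  have htu : t ∈ W ∪ M := hu ▸ Finset.mem_univ t
  rw [Finset.mem_union] at htu
  rcases htu with h | h
  · exact hall.2 t h
  · exact hall.1 t h

end Aux
theorem stmt14 [Fintype I] [DecidableEq I] (W M : Finset I) (n : ℕ)
    (hd : Disjoint W M) (hu : W ∪ M = Finset.univ)
    (hW : W.card = n) (hM : M.card = n) (hn : 2 ≤ n)
    (p : I → Set (I × I)) (hp : IsPref W M p)
    (φ : Equiv.Perm I) (hφ : InGstar W M φ) (hstab : profAct φ p = p) :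
    (∀ z : I, (permOrbit φ z).ncard = orderOf φ) ∧
    (¬ InG W M φ → Even (orderOf φ)) := by
  classical
  have hWne : W.Nonempty := Finset.card_pos.mp (hW ▸ Nat.lt_of_lt_of_le Nat.zero_lt_two hn)
  have hMne : M.Nonempty := Finset.card_pos.mp (hM ▸ Nat.lt_of_lt_of_le Nat.zero_lt_two hn)
  -- freeness
  have hfree : ∀ (k : ℕ) (w : I), (φ ^ k) w = w → φ ^ k = 1 := by
    intro k w hw
    exact fix_eq_one W M hd hu hWne hMne p hp (φ ^ k) (InGstar_pow W M φ hφ k)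
      (profAct_pow φ p hstab k) w hw
  set m := orderOf φ with hmdef
  have hm : 0 < m := orderOf_pos φ
  constructor
  · intro z
    have hset : permOrbit φ z = ↑((Finset.range m).image fun k => (φ ^ k) z) := by
      ext w
      simp only [permOrbit, Set.mem_setOf_eq, Finset.coe_image, Set.mem_image,
        Finset.mem_coe, Finset.mem_range]
      constructor
      · rintro ⟨k, rfl⟩
        refine ⟨(k % (m : ℤ)).toNat, ?_, ?_⟩
        · have h1 : k % (m : ℤ) < (m : ℤ) :=
            Int.emod_lt_of_pos k (by exact_mod_cast hm)
          omega
        · have h0 : (0 : ℤ) ≤ k % (m : ℤ) :=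
            Int.emod_nonneg k (by exact_mod_cast hm.ne')
          have : φ ^ ((k % (m : ℤ)).toNat : ℤ) = φ ^ k := by
            rw [Int.toNat_of_nonneg h0, hmdef, zpow_mod_orderOf]
          rw [← zpow_natCast, this]
      · rintro ⟨k, _, rfl⟩
        exact ⟨(k : ℤ), by rw [zpow_natCast]⟩
    rw [hset, Set.ncard_coe_finset]
    rw [Finset.card_image_of_injOn, Finset.card_range]
    intro i hi j hj hij
    simp only [Finset.mem_coe, Finset.mem_range] at hi hj
    have key : ∀ a b : ℕ, a ≤ b → b < m → (φ ^ a) z = (φ ^ b) z → a = b := by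
      intro a b hab hbm he
      have : (φ ^ (b - a)) ((φ ^ a) z) = (φ ^ a) z := by
        rw [← Equiv.Perm.mul_apply, ← pow_add]
        rw [Nat.sub_add_cancel hab, ← he]
      have h1 : φ ^ (b - a) = 1 := hfree _ _ this
      have h2 : m ∣ b - a := hmdef ▸ orderOf_dvd_of_pow_eq_one h1
      have h3 : b - a = 0 ∨ m ≤ b - a := by
        rcases Nat.eq_zero_or_pos (b - a) with h | h
        · exact Or.inl h
        · exact Or.inr (Nat.le_of_dvd h h2)
      omega
    rcases le_total i j with h | h
    · exact key i j h hj hij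
    · exact (key j i h hi hij.symm).symm
  · intro hnG
    have hsw : W.image ⇑φ = M ∧ M.image ⇑φ = W := by
      rcases hφ with h | h
      · exact absurd h hnG
      · exact h
    have hodd : ∀ k : ℕ, (Even k → W.image ⇑(φ ^ k) = W) ∧ (Odd k → W.image ⇑(φ ^ k) = M) := by
      intro k
      induction k with
      | zero =>
        constructor
        · intro _; simp [Finset.image_id]
        · intro h; exact absurd h (by simp)
      | succ k ih =>
        have himg : W.image ⇑(φ ^ (k + 1)) = (W.image ⇑(φ ^ k)).image ⇑φ := by
          rw [pow_succ', Finset.image_image]; rfl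
        constructor
        · intro he
          have hk : Odd k := by
            rcases Nat.even_or_odd k with h | h
            · exact absurd he (Nat.not_even_iff_odd.mpr h.add_one)
            · exact h
          rw [himg, ih.2 hk, hsw.2]
        · intro ho
          have hk : Even k := by
            rcases Nat.even_or_odd k with h | h
            · exact h
            · exact absurd ho (Nat.not_odd_iff_even.mpr h.add_one)
          rw [himg, ih.1 hk, hsw.1]
    by_contra hev
    have hom : Odd m := Nat.not_even_iff_odd.mp hev
    have h1 : W.image ⇑(φ ^ m) = M := (hodd m).2 hom
    rw [hmdef, pow_orderOf_eq_one] at h1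
    simp only [Equiv.Perm.coe_one, Finset.image_id] at h1
    rw [h1] at hd
    exact (hMne.ne_empty) ((Finset.disjoint_self_iff_empty _).mp hd)
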